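/- Let (X_{I,m})_{(I,m)∈2^ℤ×ℕ} be iid complex random variables with finite variance, zero mean, and P(X_{I,m} = 0) < 1. Let u₀ ∈ L²_G with u₀ ∉ H^ε_G for every ε > 0, and let u₀^ω = Σ X_{I,m}(ω) u_{I,m} be its randomization. Then almost surely u₀^ω ∈ L²_G and u₀^ω ∉ H^ε_G for every ε > 0. -/

import Mathlib

open Real MeasureTheory ProbabilityTheory

/-- The Sobolev weight `1 + (2m+1)·2^I` of the block indexed by `(I, m) ∈ ℤ × ℕ`
(dyadic frequency `2^I`, Hermite mode `m`). -/
noncomputable def blockWeight (p : ℤ × ℕ) : ℝ :=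
  1 + (2 * (p.2 : ℝ) + 1) * (2 : ℝ) ^ p.1

lemma one_le_blockWeight (p : ℤ × ℕ) : 1 ≤ blockWeight p := by
  have h1 : (0:ℝ) < (2:ℝ) ^ p.1 := zpow_pos (by norm_num) _
  have h2 : (0:ℝ) ≤ 2 * (p.2 : ℝ) + 1 := by positivity
  have := mul_nonneg h2 h1.le
  unfold blockWeight; linarith

/-- If `b` is nonnegative and non-summable, then `p ↦ 1 - exp (-(t * b p))` is
non-summable for every `t > 0`. -/
lemma not_summable_one_sub_exp {t : ℝ} (ht : 0 < t) {b : ℤ × ℕ → ℝ} (hb : ∀ p, 0 ≤ b p)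
    (hbdiv : ¬ Summable b) : ¬ Summable (fun p => 1 - Real.exp (-(t * b p))) := by
  intro hc
  set c : ℤ × ℕ → ℝ := fun p => 1 - Real.exp (-(t * b p)) with hcdef
  -- the set where `t * b p > 1` is finite
  have hco : Filter.Tendsto c Filter.cofinite (nhds 0) := hc.tendsto_cofinite_zero
  have hsmall : ∀ᶠ p in Filter.cofinite, c p < 1 - Real.exp (-1) := by
    have h01 : (0:ℝ) < 1 - Real.exp (-1) := by
      have : Real.exp (-1) < 1 := by
        rw [Real.exp_lt_one_iff]; norm_num
      linarith
    exact hco.eventually (gt_mem_nhds h01)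
  have hF : {p : ℤ × ℕ | ¬ c p < 1 - Real.exp (-1)}.Finite := hsmall
  apply hbdiv
  rw [← hF.summable_compl_iff]
  have hcs : Summable ((fun p => (2 / t) * c p) ∘ (Subtype.val :
      ({p : ℤ × ℕ | ¬ c p < 1 - Real.exp (-1)}ᶜ : Set (ℤ × ℕ)) → ℤ × ℕ)) :=
    ((hc.mul_left (2 / t)).subtype _)
  refine Summable.of_nonneg_of_le (fun x => hb _) (fun x => ?_) hcs
  -- on the complement, `c x < 1 - exp (-1)`, hence `t * b x ≤ 1`
  have hx : c x.1 < 1 - Real.exp (-1) := not_not.mp x.2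
  have htb : t * b x.1 ≤ 1 := by
    by_contra h
    push_neg at h
    have : Real.exp (-(t * b x.1)) < Real.exp (-1) := by
      apply Real.exp_lt_exp.2; linarith
    have : 1 - Real.exp (-1) < c x.1 := by
      simp only [hcdef]; linarith
    linarith
  -- chord bound : for `0 ≤ y ≤ 1`, `y ≤ 2 * (1 - exp (-y))`
  set y := t * b x.1 with hy
  have hy0 : 0 ≤ y := mul_nonneg ht.le (hb _)
  have hexp : Real.exp (-y) * (1 + y) ≤ 1 := by
    have h1 : y + 1 ≤ Real.exp y := Real.add_one_le_exp y
    have h2 : 0 < Real.exp (-y) := Real.exp_pos _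
    have h3 : Real.exp (-y) * Real.exp y = 1 := by
      rw [← Real.exp_add]; simp
    nlinarith
  have hchord : y ≤ 2 * (1 - Real.exp (-y)) := by
    have h2 : 0 < Real.exp (-y) := Real.exp_pos _
    nlinarith
  -- conclude `b x ≤ (2/t) * c x`
  show b x.1 ≤ 2 / t * c x.1
  have : b x.1 = y / t := by field_simp [hy]; rw [hy]; ring
  rw [this, div_le_iff₀ ht]
  have : c x.1 = 1 - Real.exp (-y) := by simp [hcdef, hy]
  rw [this]
  calc y ≤ 2 * (1 - Real.exp (-y)) := hchord
    _ = 2 / t * (1 - Real.exp (-y)) * t := by field_simp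

/-- Key probabilistic lemma: if `Y p` are independent nonnegative random
variables, each at least `t` with probability at least `δ`, and `b` is a
nonnegative non-summable sequence, then a.s. `∑ b p * Y p = ∞`. -/
lemma ae_not_summable_mul {Ω : Type*} [MeasurableSpace Ω] (P : Measure Ω)
    [IsProbabilityMeasure P]
    (Y : ℤ × ℕ → Ω → ℝ) (hYm : ∀ p, Measurable (Y p)) (hYnn : ∀ p ω, 0 ≤ Y p ω)
    (hYindep : iIndepFun Y P)
    {t δ : ℝ} (ht : 0 < t) (hδ : 0 < δ)
    (hδP : ∀ p, δ ≤ (P {ω | t ≤ Y p ω}).toReal)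
    (b : ℤ × ℕ → ℝ) (hb : ∀ p, 0 ≤ b p) (hbdiv : ¬ Summable b) :
    ∀ᵐ ω ∂P, ¬ Summable (fun p => b p * Y p ω) := by
  classical
  set Z : ℤ × ℕ → Ω → ℝ := fun p ω => b p * Y p ω with hZdef
  have hZm : ∀ p, Measurable (Z p) := fun p => (hYm p).const_mul (b p)
  have hZnn : ∀ p ω, 0 ≤ Z p ω := fun p ω => mul_nonneg (hb p) (hYnn p ω)
  have hZindep : iIndepFun Z P := by
    have := hYindep.comp (fun p (x : ℝ) => b p * x) (fun p => measurable_const_mul _)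
    exact this
  set c : ℤ × ℕ → ℝ := fun p => 1 - Real.exp (-(t * b p)) with hcdef
  have hc0 : ∀ p, 0 ≤ c p := by
    intro p
    have : Real.exp (-(t * b p)) ≤ 1 := by
      rw [Real.exp_le_one_iff]
      have := mul_nonneg ht.le (hb p); linarith
    simp only [hcdef]; linarith
  have hc1 : ∀ p, c p ≤ 1 := by
    intro p
    have := Real.exp_pos (-(t * b p))
    simp only [hcdef]; linarith
  have hδ1 : δ ≤ 1 := by
    refine (hδP (0, 0)).trans ?_
    have := prob_le_one (μ := P) (s := {ω | t ≤ Y (0,0) ω})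
    simpa using ENNReal.toReal_mono (by simp) this
  -- single-factor bound on the mgf
  have key : ∀ p, mgf (Z p) P (-1) ≤ 1 - δ * c p := by
    intro p
    have hA : MeasurableSet {ω | t ≤ Y p ω} := measurableSet_le measurable_const (hYm p)
    set A := {ω | t ≤ Y p ω} with hAdef
    set g : Ω → ℝ := fun ω => 1 - c p * A.indicator (fun _ => (1:ℝ)) ω with hgdef
    have hgint : Integrable g P := by
      apply (integrable_const (1:ℝ)).sub
      exact (((integrable_const (1:ℝ)).indicator hA)).const_mul (c p)
    have hle : ∀ ω, Real.exp (-1 * Z p ω) ≤ g ω := by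
      intro ω
      by_cases hω : ω ∈ A
      · have h1 : t ≤ Y p ω := hω
        have h2 : t * b p ≤ b p * Y p ω := by
          have := mul_le_mul_of_nonneg_left h1 (hb p)
          linarith [this]
        have : Real.exp (-1 * Z p ω) ≤ Real.exp (-(t * b p)) := by
          apply Real.exp_le_exp.2
          simp only [hZdef]; linarith
        simp only [hgdef, Set.indicator_of_mem hω]
        simp only [hcdef] at *
        linarith
      · have : Real.exp (-1 * Z p ω) ≤ 1 := by
          rw [Real.exp_le_one_iff]
          have := hZnn p ω; linarith
        simp only [hgdef, Set.indicator_of_notMem hω]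
        linarith
    have hexpint : Integrable (fun ω => Real.exp (-1 * Z p ω)) P := by
      refine Integrable.mono' (integrable_const (1:ℝ))
        (((hZm p).const_mul (-1)).exp.aestronglyMeasurable) ?_
      filter_upwards with ω
      rw [Real.norm_eq_abs, abs_of_pos (Real.exp_pos _), Real.exp_le_one_iff]
      have := hZnn p ω; linarith
    have h1 : mgf (Z p) P (-1) ≤ ∫ ω, g ω ∂P := by
      exact integral_mono hexpint hgint hle
    have h2 : ∫ ω, g ω ∂P = 1 - c p * (P A).toReal := by
      simp only [hgdef]
      rw [integral_sub (integrable_const _)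
        ((((integrable_const (1:ℝ)).indicator hA)).const_mul (c p))]
      rw [integral_const]
      simp only [probReal_univ, one_smul]
      rw [integral_const_mul, integral_indicator_const (1:ℝ) hA]
      simp
      exact Or.inl rfl
    have h3 : δ ≤ (P A).toReal := hδP p
    rw [h2] at h1
    have := mul_le_mul_of_nonneg_left h3 (hc0 p)
    linarith
  -- enumeration of ℤ × ℕ
  set e : ℕ ≃ ℤ × ℕ := (Denumerable.eqv (ℤ × ℕ)).symm with hedef
  set s : ℕ → Finset (ℤ × ℕ) := fun n => (Finset.range n).map e.toEmbedding with hsdef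
  -- divergence of partial sums of c
  have hcdiv : ¬ Summable c := not_summable_one_sub_exp ht hb hbdiv
  have hcdiv' : ¬ Summable (c ∘ e) := fun h => hcdiv (e.summable_iff.mp h)
  have hD : Filter.Tendsto (fun n => ∑ i ∈ Finset.range n, c (e i))
      Filter.atTop Filter.atTop :=
    (not_summable_iff_tendsto_nat_atTop_of_nonneg (fun n => hc0 _)).mp hcdiv'
  have hDs : ∀ n, ∑ p ∈ s n, c p = ∑ i ∈ Finset.range n, c (e i) := by
    intro n; simp [hsdef, Finset.sum_map]
  -- bound on the integral of exp(-S_n)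
  have hprod : ∀ n, mgf (∑ p ∈ s n, Z p) P (-1) ≤
      Real.exp (-δ * ∑ p ∈ s n, c p) := by
    intro n
    rw [hZindep.mgf_sum hZm (s n)]
    have step1 : ∏ p ∈ s n, mgf (Z p) P (-1) ≤ ∏ p ∈ s n, (1 - δ * c p) := by
      apply Finset.prod_le_prod
      · intro p _
        apply integral_nonneg
        intro ω; exact (Real.exp_pos _).le
      · intro p _; exact key p
    have step2 : ∏ p ∈ s n, (1 - δ * c p) ≤ ∏ p ∈ s n, Real.exp (-(δ * c p)) := by
      apply Finset.prod_le_prod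
      · intro p _
        have := mul_le_mul_of_nonneg_left (hc1 p) hδ.le
        nlinarith [hδ1]
      · intro p _
        have := Real.add_one_le_exp (-(δ * c p))
        linarith
    have step3 : ∏ p ∈ s n, Real.exp (-(δ * c p)) = Real.exp (-δ * ∑ p ∈ s n, c p) := by
      rw [← Real.exp_sum]
      congr 1
      rw [Finset.mul_sum]
      apply Finset.sum_congr rfl
      intro p _; ring
    calc ∏ p ∈ s n, mgf (Z p) P (-1) ≤ ∏ p ∈ s n, (1 - δ * c p) := step1
      _ ≤ ∏ p ∈ s n, Real.exp (-(δ * c p)) := step2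
      _ = Real.exp (-δ * ∑ p ∈ s n, c p) := by rw [step3]
  -- the sets A k
  set A : ℕ → Set Ω := fun k => ⋂ n, {ω | (∑ p ∈ s n, Z p) ω ≤ (k : ℝ)} with hAdef
  have hSm : ∀ n, Measurable (∑ p ∈ s n, Z p) := by
    intro n
    have heq : (∑ p ∈ s n, Z p) = fun ω => ∑ p ∈ s n, Z p ω := by
      ext ω; rw [Finset.sum_apply]
    rw [heq]
    exact Finset.measurable_sum _ (fun p _ => hZm p)
  have hAmeas : ∀ k, MeasurableSet (A k) := by
    intro k
    exact MeasurableSet.iInter (fun n => measurableSet_le (hSm n) measurable_const)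
  have hSnn : ∀ n ω, 0 ≤ (∑ p ∈ s n, Z p) ω := by
    intro n ω
    rw [Finset.sum_apply]
    exact Finset.sum_nonneg (fun p _ => hZnn p ω)
  have hA0 : ∀ k, P (A k) = 0 := by
    intro k
    have hint : ∀ n, Integrable (fun ω => Real.exp (-1 * (∑ p ∈ s n, Z p) ω)) P := by
      intro n
      refine Integrable.mono' (integrable_const (1:ℝ))
        (((hSm n).const_mul (-1)).exp.aestronglyMeasurable) ?_
      filter_upwards with ω
      rw [Real.norm_eq_abs, abs_of_pos (Real.exp_pos _), Real.exp_le_one_iff]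
      have := hSnn n ω; linarith
    have hbound : ∀ n, Real.exp (-(k:ℝ)) * (P (A k)).toReal ≤
        Real.exp (-δ * ∑ p ∈ s n, c p) := by
      intro n
      have h1 : Real.exp (-(k:ℝ)) * (P (A k)).toReal ≤
          ∫ ω in A k, Real.exp (-1 * (∑ p ∈ s n, Z p) ω) ∂P := by
        apply setIntegral_ge_of_const_le_real (hAmeas k) (measure_ne_top P _)
        · intro ω hω
          have hωn : (∑ p ∈ s n, Z p) ω ≤ (k:ℝ) := by
            have := Set.mem_iInter.mp hω n
            exact this
          apply Real.exp_le_exp.2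
          linarith
        · exact (hint n).integrableOn
      have h2 : ∫ ω in A k, Real.exp (-1 * (∑ p ∈ s n, Z p) ω) ∂P ≤
          ∫ ω, Real.exp (-1 * (∑ p ∈ s n, Z p) ω) ∂P := by
        apply setIntegral_le_integral (hint n)
        filter_upwards with ω
        exact (Real.exp_pos _).le
      have h3 : ∫ ω, Real.exp (-1 * (∑ p ∈ s n, Z p) ω) ∂P ≤
          Real.exp (-δ * ∑ p ∈ s n, c p) := hprod n
      linarith
    have htend : Filter.Tendsto (fun n => Real.exp (-δ * ∑ p ∈ s n, c p))
        Filter.atTop (nhds 0) := by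
      have h1 : Filter.Tendsto (fun n => -δ * ∑ p ∈ s n, c p) Filter.atTop Filter.atBot := by
        have : Filter.Tendsto (fun n => ∑ p ∈ s n, c p) Filter.atTop Filter.atTop := by
          simp only [hDs]; exact hD
        exact Filter.Tendsto.const_mul_atTop_of_neg (by linarith) this
      exact Real.tendsto_exp_atBot.comp h1
    have hle0 : Real.exp (-(k:ℝ)) * (P (A k)).toReal ≤ 0 :=
      ge_of_tendsto htend (Filter.Eventually.of_forall hbound)
    have h0 : (P (A k)).toReal = 0 := by
      have hnn : 0 ≤ (P (A k)).toReal := ENNReal.toReal_nonneg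
      have he := Real.exp_pos (-(k:ℝ))
      nlinarith
    rwa [ENNReal.toReal_eq_zero_iff, or_iff_left (measure_ne_top P _)] at h0
  -- conclude
  have hsub : {ω | Summable (fun p => b p * Y p ω)} ⊆ ⋃ k : ℕ, A k := by
    intro ω hω
    obtain ⟨k, hk⟩ := exists_nat_ge (∑' p, b p * Y p ω)
    refine Set.mem_iUnion.mpr ⟨k, Set.mem_iInter.mpr fun n => ?_⟩
    have h1 : (∑ p ∈ s n, Z p) ω = ∑ p ∈ s n, b p * Y p ω := by
      rw [Finset.sum_apply]
    have h2 : ∑ p ∈ s n, b p * Y p ω ≤ ∑' p, b p * Y p ω :=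
      Summable.sum_le_tsum (s n) (fun p _ => mul_nonneg (hb p) (hYnn p ω)) hω
    show (∑ p ∈ s n, Z p) ω ≤ (k:ℝ)
    rw [h1]; linarith
  rw [ae_iff]
  simp only [not_not]
  exact measure_mono_null hsub (measure_iUnion_null hA0)

/-- Non-smoothing of the randomization: if the blocks of `u₀` (with squared `L²`
norms `a (I,m) = ‖u_{I,m}‖²_{L²}`) satisfy `u₀ ∈ L²_G` (i.e. `Σ a < ∞`) but
`u₀ ∉ H^ε_G` for every `ε > 0` (i.e. `Σ (1+(2m+1)I)^ε a_{I,m} = ∞`), and the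
`X_{I,m}` are iid, mean-zero, finite-variance, not a.s. zero, then almost surely
the randomization `u₀^ω` is in `L²_G` but in no `H^ε_G` with `ε > 0`. -/
theorem randomization_non_smoothing
    {Ω : Type*} [MeasurableSpace Ω] (P : Measure Ω) [IsProbabilityMeasure P]
    (X : ℤ × ℕ → Ω → ℂ) (hmeas : ∀ p, Measurable (X p))
    (hindep : iIndepFun X P)
    (hident : ∀ p q, IdentDistrib (X p) (X q) P P)
    (hL2 : ∀ p, MemLp (X p) 2 P)
    (hmean : ∀ p, (∫ ω, X p ω ∂P) = 0)
    (hnondeg : ∀ p, P {ω | X p ω = 0} < 1)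
    (a : ℤ × ℕ → ℝ) (ha : ∀ p, 0 ≤ a p)
    (haL2 : Summable a)
    (haRough : ∀ ε : ℝ, 0 < ε → ¬ Summable (fun p => blockWeight p ^ ε * a p)) :
    ∀ᵐ ω ∂P, (Summable fun p => ‖X p ω‖ ^ 2 * a p) ∧
      ∀ ε : ℝ, 0 < ε → ¬ Summable (fun p => blockWeight p ^ ε * (‖X p ω‖ ^ 2 * a p)) := by
  classical
  -- Part 1: almost sure summability
  set Y : ℤ × ℕ → Ω → ℝ := fun p ω => ‖X p ω‖ ^ 2 with hYdef
  have hYm : ∀ p, Measurable (Y p) := fun p => (hmeas p).norm.pow_const 2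
  have hYnn : ∀ p ω, 0 ≤ Y p ω := fun p ω => sq_nonneg _
  have hfm : ∀ p, Measurable (fun ω => ENNReal.ofReal (Y p ω * a p)) :=
    fun p => ((hYm p).mul_const (a p)).ennreal_ofReal
  have hEeq : ∀ p, ∫⁻ ω, ENNReal.ofReal (Y p ω) ∂P
      = ∫⁻ ω, ENNReal.ofReal (Y (0,0) ω) ∂P := by
    intro p
    have hg : Measurable (fun z : ℂ => ENNReal.ofReal (‖z‖ ^ 2)) :=
      (measurable_norm.pow_const 2).ennreal_ofReal
    exact ((hident p (0,0)).comp hg).lintegral_eq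
  have hEfin : ∫⁻ ω, ENNReal.ofReal (Y (0,0) ω) ∂P < ⊤ := by
    have hint : Integrable (fun ω => Y (0,0) ω) P := by
      have h := (hL2 (0,0)).integrable_norm_rpow (by norm_num) (by norm_num)
      apply h.congr
      filter_upwards with ω
      rw [ENNReal.toReal_ofNat, show ((2:ℝ) = ((2:ℕ):ℝ)) by norm_num,
        Real.rpow_natCast]
    exact hint.lintegral_lt_top
  set E : ENNReal := ∫⁻ ω, ENNReal.ofReal (Y (0,0) ω) ∂P with hEdef
  have part1 : ∀ᵐ ω ∂P, Summable fun p => ‖X p ω‖ ^ 2 * a p := by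
    have hlt : ∫⁻ ω, ∑' p, ENNReal.ofReal (Y p ω * a p) ∂P < ⊤ := by
      rw [lintegral_tsum (fun p => (hfm p).aemeasurable)]
      have hterm : ∀ p, ∫⁻ ω, ENNReal.ofReal (Y p ω * a p) ∂P
          = ENNReal.ofReal (a p) * E := by
        intro p
        have : ∀ ω, ENNReal.ofReal (Y p ω * a p)
            = ENNReal.ofReal (Y p ω) * ENNReal.ofReal (a p) :=
          fun ω => ENNReal.ofReal_mul (hYnn p ω)
        simp_rw [this]
        rw [lintegral_mul_const _ ((hYm p).ennreal_ofReal), hEeq p, mul_comm]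
      simp_rw [hterm]
      rw [ENNReal.tsum_mul_right]
      have h1 : ∑' p, ENNReal.ofReal (a p) = ENNReal.ofReal (∑' p, a p) :=
        (ENNReal.ofReal_tsum_of_nonneg ha haL2).symm
      rw [h1]
      exact ENNReal.mul_lt_top ENNReal.ofReal_lt_top hEfin
    have hae : ∀ᵐ ω ∂P, ∑' p, ENNReal.ofReal (Y p ω * a p) < ⊤ :=
      ae_lt_top (Measurable.ennreal_tsum hfm) hlt.ne
    filter_upwards [hae] with ω hω
    have hsum : Summable fun p => (ENNReal.ofReal (Y p ω * a p)).toReal :=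
      ENNReal.summable_toReal hω.ne
    apply hsum.congr
    intro p
    rw [ENNReal.toReal_ofReal (mul_nonneg (hYnn p ω) (ha p))]
  -- Part 2: setup for the divergence lemma
  have hYindep : iIndepFun Y P := by
    have := hindep.comp (fun _ (z : ℂ) => ‖z‖ ^ 2)
      (fun _ => measurable_norm.pow_const 2)
    exact this
  -- find t, δ
  obtain ⟨t, ht, δ, hδ, hδP⟩ : ∃ t : ℝ, 0 < t ∧ ∃ δ : ℝ, 0 < δ ∧
      ∀ p, δ ≤ (P {ω | t ≤ Y p ω}).toReal := by
    set p0 : ℤ × ℕ := (0, 0) with hp0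
    have hs0 : MeasurableSet {ω | X p0 ω = 0} :=
      (hmeas p0) (measurableSet_singleton 0)
    have hpos : 0 < P {ω | X p0 ω = 0}ᶜ := by
      rw [prob_compl_eq_one_sub hs0]
      exact tsub_pos_iff_lt.mpr (hnondeg p0)
    have hcover : {ω | X p0 ω = 0}ᶜ ⊆ ⋃ n : ℕ, {ω | 1 / (n + 1 : ℝ) ≤ Y p0 ω} := by
      intro ω hω
      have hne : X p0 ω ≠ 0 := hω
      have hpos' : 0 < Y p0 ω := by
        have : 0 < ‖X p0 ω‖ := norm_pos_iff.mpr hne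
        positivity
      obtain ⟨n, hn⟩ := exists_nat_one_div_lt hpos'
      exact Set.mem_iUnion.mpr ⟨n, hn.le⟩
    have hex : ∃ n : ℕ, 0 < P {ω | 1 / (n + 1 : ℝ) ≤ Y p0 ω} := by
      by_contra h
      push_neg at h
      have h0 : ∀ n : ℕ, P {ω | 1 / (n + 1 : ℝ) ≤ Y p0 ω} = 0 :=
        fun n => le_antisymm (h n) zero_le
      have : P ({ω | X p0 ω = 0}ᶜ) = 0 :=
        measure_mono_null hcover (measure_iUnion_null h0)
      rw [this] at hpos; exact lt_irrefl _ hpos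
    obtain ⟨n, hn⟩ := hex
    refine ⟨1 / (n + 1 : ℝ), by positivity,
      (P {ω | 1 / (n + 1 : ℝ) ≤ Y p0 ω}).toReal, ?_, ?_⟩
    · exact ENNReal.toReal_pos hn.ne' (measure_ne_top P _)
    · intro p
      have hsm : MeasurableSet {z : ℂ | 1 / (n + 1 : ℝ) ≤ ‖z‖ ^ 2} :=
        measurableSet_le measurable_const (measurable_norm.pow_const 2)
      have heq := (hident p0 p).measure_mem_eq hsm
      have h1 : {ω | 1 / (n + 1 : ℝ) ≤ Y p0 ω}
          = X p0 ⁻¹' {z : ℂ | 1 / (n + 1 : ℝ) ≤ ‖z‖ ^ 2} := rfl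
      have h2 : {ω | 1 / (n + 1 : ℝ) ≤ Y p ω}
          = X p ⁻¹' {z : ℂ | 1 / (n + 1 : ℝ) ≤ ‖z‖ ^ 2} := rfl
      rw [h1, h2, heq]
  -- apply the divergence lemma for ε = 1/(k+1)
  have part2 : ∀ᵐ ω ∂P, ∀ k : ℕ,
      ¬ Summable (fun p => (blockWeight p ^ (1 / (k + 1 : ℝ)) * a p) * Y p ω) := by
    rw [ae_all_iff]
    intro k
    apply ae_not_summable_mul P Y hYm hYnn hYindep ht hδ hδP
    · intro p
      exact mul_nonneg (Real.rpow_nonneg (by linarith [one_le_blockWeight p]) _) (ha p)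
    · exact haRough _ (by positivity)
  filter_upwards [part1, part2] with ω h1 h2
  refine ⟨h1, ?_⟩
  intro ε hε hsum
  obtain ⟨k, hk⟩ := exists_nat_ge (1 / ε)
  have hkε : 1 / (k + 1 : ℝ) ≤ ε := by
    rw [div_le_iff₀ (by positivity)]
    have h1k : 1 / ε ≤ (k : ℝ) := hk
    have := (div_le_iff₀ hε).mp h1k
    nlinarith
  apply h2 k
  refine Summable.of_nonneg_of_le (fun p => ?_) (fun p => ?_) hsum
  · exact mul_nonneg (mul_nonneg (Real.rpow_nonneg
      (by linarith [one_le_blockWeight p]) _) (ha p)) (hYnn p ω)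
  · have hw : blockWeight p ^ (1 / (k + 1 : ℝ)) ≤ blockWeight p ^ ε :=
      Real.rpow_le_rpow_of_exponent_le (one_le_blockWeight p) hkε
    have hnn : 0 ≤ a p * Y p ω := mul_nonneg (ha p) (hYnn p ω)
    calc blockWeight p ^ (1 / (k + 1 : ℝ)) * a p * Y p ω
        = blockWeight p ^ (1 / (k + 1 : ℝ)) * (a p * Y p ω) := by ring
      _ ≤ blockWeight p ^ ε * (a p * Y p ω) := mul_le_mul_of_nonneg_right hw hnn
      _ = blockWeight p ^ ε * (‖X p ω‖ ^ 2 * a p) := by rw [hYdef]; ring
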